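/- Assume that ω ↦ log‖A₁(ω)‖ is integrable with E[log‖A₁‖] < 0, and that E[log⁺‖B₁‖] < ∞. Define U := Σ_{k=0}^{∞} (A₁ ⋯ A_k) B_{k+1} and U' := Σ_{k=0}^{∞} (A₂ ⋯ A_{k+1}) B_{k+2} (both series converge absolutely almost surely). Then: (i) U = A₁ U' + B₁ almost surely; (ii) U' is independent of the pair (A₁, B₁); and (iii) U' has the same distribution as U. Consequently the law of U solves the distributional fixed-point equation U ≟ A₁ U + B₁ in which the U on the right-hand side is independent of (A₁, B₁). -/

import Mathlib

open MeasureTheory ProbabilityTheory Filter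
open scoped NNReal Topology

/-- The ordered composition `A s ω ∘ A (s+1) ω ∘ ⋯ ∘ A (s+k-1) ω` of random continuous linear
maps on Euclidean space (the identity when `k = 0`). -/
noncomputable def fwdProd {Ω : Type*} {q : ℕ}
    (A : ℕ → Ω → (EuclideanSpace ℝ (Fin q) →L[ℝ] EuclideanSpace ℝ (Fin q)))
    (s k : ℕ) (ω : Ω) : EuclideanSpace ℝ (Fin q) →L[ℝ] EuclideanSpace ℝ (Fin q) :=
  ((List.range k).map (fun i => A (s + i) ω)).prod

section Aux

variable {Ω : Type*} {q : ℕ}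
  (A : ℕ → Ω → (EuclideanSpace ℝ (Fin q) →L[ℝ] EuclideanSpace ℝ (Fin q)))

lemma fwdProd_zero (s : ℕ) (ω : Ω) : fwdProd A s 0 ω = 1 := by simp [fwdProd]

lemma fwdProd_succ (s k : ℕ) (ω : Ω) :
    fwdProd A s (k+1) ω = fwdProd A s k ω * A (s + k) ω := by
  simp [fwdProd, List.range_succ]

lemma fwdProd_succ_left (s k : ℕ) (ω : Ω) :
    fwdProd A s (k+1) ω = A s ω * fwdProd A (s+1) k ω := by
  simp only [fwdProd, List.range_succ_eq_map, List.map_cons, List.map_map, List.prod_cons,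
    Nat.add_zero]
  congr 2
  apply List.map_congr_left
  intro i _
  show A (s + (i+1)) ω = A (s + 1 + i) ω
  congr 1
  omega

lemma fwdProd_norm_le (s k : ℕ) (ω : Ω) :
    ‖fwdProd A s k ω‖ ≤ Real.exp (∑ i ∈ Finset.range k, Real.log ‖A (s + i) ω‖) := by
  induction k with
  | zero =>
    simp only [fwdProd_zero, Finset.range_zero, Finset.sum_empty, Real.exp_zero]
    rw [ContinuousLinearMap.one_def]
    exact ContinuousLinearMap.norm_id_le
  | succ k ih =>
    rw [fwdProd_succ, Finset.sum_range_succ, Real.exp_add]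
    calc ‖fwdProd A s k ω * A (s + k) ω‖ ≤ ‖fwdProd A s k ω‖ * ‖A (s + k) ω‖ := norm_mul_le _ _
    _ ≤ _ := by
        apply mul_le_mul ih (Real.le_exp_log _) (norm_nonneg _) (Real.exp_nonneg _)

lemma fwdProd_eq (s k : ℕ) (ω : Ω) :
    fwdProd A s k ω = ((List.range k).map (fun i => A (i + s) ω)).prod := by
  unfold fwdProd
  congr 1
  apply List.map_congr_left
  intro i _
  congr 1
  omega

lemma summable_of_eventually_le_geometric {f : ℕ → ℝ} {r C : ℝ} (hr0 : 0 ≤ r) (hr : r < 1)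
    (h0 : ∀ n, 0 ≤ f n) (h : ∀ᶠ n in atTop, f n ≤ C * r ^ n) : Summable f := by
  obtain ⟨N, hN⟩ := eventually_atTop.1 h
  rw [← summable_nat_add_iff N]
  have : Summable (fun n : ℕ => C * r ^ (n + N)) := by
    simp_rw [pow_add]
    exact ((summable_geometric_of_lt_one hr0 hr).mul_right _).mul_left _
  exact this.of_nonneg_of_le (fun n => h0 _) (fun n => hN _ (Nat.le_add_left _ _))

lemma measurable_tsum_fin {α : Type*} [MeasurableSpace α]
    {f : ℕ → α → EuclideanSpace ℝ (Fin q)} (hf : ∀ i, Measurable (f i)) :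
    Measurable (fun a => ∑' i, f i a) := by
  classical
  set s : ℕ → α → EuclideanSpace ℝ (Fin q) := fun n a => ∑ i ∈ Finset.range n, f i a with hs
  have hsm : ∀ n, Measurable (s n) := fun n => Finset.measurable_sum _ (fun i _ => hf i)
  set sn : ℕ → α → ℝ := fun n a => ∑ i ∈ Finset.range n, ‖f i a‖ with hsn
  have hsnm : ∀ n, Measurable (sn n) :=
    fun n => Finset.measurable_sum _ (fun i _ => (hf i).norm)
  have hS : MeasurableSet {a | ∃ c, Tendsto (fun n => sn n a) atTop (𝓝 c)} :=
    measurableSet_exists_tendsto hsnm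
  set S := {a | ∃ c, Tendsto (fun n => sn n a) atTop (𝓝 c)} with hSdef
  have hsummable : ∀ a, a ∈ S ↔ Summable (fun i => f i a) := by
    intro a
    rw [← summable_norm_iff]
    constructor
    · rintro ⟨c, hc⟩
      have hmono : Monotone (fun n => sn n a) := monotone_nat_of_le_succ fun m => by
        simp only [hsn, Finset.sum_range_succ]
        exact le_add_of_nonneg_right (norm_nonneg _)
      exact summable_of_sum_range_le (fun i => norm_nonneg _) (fun n => hmono.ge_of_tendsto hc n)
    · intro h
      exact ⟨_, h.hasSum.tendsto_sum_nat⟩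
  apply measurable_of_tendsto_metrizable
    (f := fun n a => if a ∈ S then s n a else 0)
  · intro n
    exact Measurable.ite hS (hsm n) measurable_const
  · rw [tendsto_pi_nhds]
    intro a
    by_cases ha : a ∈ S
    · simp only [ha, if_true]
      exact ((hsummable a).1 ha).hasSum.tendsto_sum_nat
    · simp only [ha, if_false]
      rw [tsum_eq_zero_of_not_summable (fun h => ha ((hsummable a).2 h))]
      exact tendsto_const_nhds

lemma tendsto_succ_sub_div {s : ℕ → ℝ} {c : ℝ}
    (h : Tendsto (fun n : ℕ => (n : ℝ)⁻¹ * s n) atTop (𝓝 c)) :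
    Tendsto (fun n : ℕ => (n : ℝ)⁻¹ * (s (n + 1) - s n)) atTop (𝓝 0) := by
  have h1 : Tendsto (fun n : ℕ => ((n + 1 : ℕ) : ℝ)⁻¹ * s (n + 1)) atTop (𝓝 c) :=
    h.comp (tendsto_add_atTop_nat 1)
  have h2 : Tendsto (fun n : ℕ => (1 + (n : ℝ)⁻¹)) atTop (𝓝 (1 + 0)) :=
    tendsto_const_nhds.add tendsto_inv_atTop_nhds_zero_nat
  have h3 : Tendsto (fun n : ℕ => ((n + 1 : ℕ) : ℝ)⁻¹ * s (n + 1) * (1 + (n : ℝ)⁻¹)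
      - (n : ℝ)⁻¹ * s n) atTop (𝓝 (c * (1 + 0) - c)) := (h1.mul h2).sub h
  have h4 : (c * (1 + 0) - c) = 0 := by ring
  rw [h4] at h3
  apply h3.congr'
  filter_upwards [eventually_ge_atTop 1] with n hn
  have hn0 : (n : ℝ) ≠ 0 := by positivity
  push_cast
  field_simp

end Aux

/-- The backward series `U = Σ_k (A₁ ⋯ A_k) B_{k+1}` and its shift
`U' = Σ_k (A₂ ⋯ A_{k+1}) B_{k+2}` satisfy, almost surely, `U = A₁ U' + B₁`; moreover `U'` is
independent of `(A₁, B₁)` and has the same distribution as `U`.  Consequently the law of `U`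
solves the random fixed-point equation `U ≟ A₁ U + B₁`. -/
theorem backward_series_fixed_point
    {Ω : Type*} [MeasureSpace Ω] [IsProbabilityMeasure (ℙ : Measure Ω)]
    {q : ℕ} (hq : 1 ≤ q)
    [MeasurableSpace (EuclideanSpace ℝ (Fin q) →L[ℝ] EuclideanSpace ℝ (Fin q))]
    [BorelSpace (EuclideanSpace ℝ (Fin q) →L[ℝ] EuclideanSpace ℝ (Fin q))]
    (A : ℕ → Ω → (EuclideanSpace ℝ (Fin q) →L[ℝ] EuclideanSpace ℝ (Fin q)))
    (B : ℕ → Ω → EuclideanSpace ℝ (Fin q))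
    (hAmeas : ∀ k : ℕ, Measurable (A (k + 1)))
    (hBmeas : ∀ k : ℕ, Measurable (B (k + 1)))
    (hiid : iIndepFun
      (fun (k : ℕ) ω => (A (k + 1) ω, B (k + 1) ω)) ℙ)
    (hident : ∀ k : ℕ, IdentDistrib (fun ω => (A (k + 1) ω, B (k + 1) ω))
      (fun ω => (A 1 ω, B 1 ω)) ℙ ℙ)
    (hlogA_int : Integrable (fun ω => Real.log ‖A 1 ω‖) ℙ)
    (hlogA_neg : ∫ ω, Real.log ‖A 1 ω‖ ∂ℙ < 0)
    (hlogB_int : Integrable (fun ω => Real.log (max 1 ‖B 1 ω‖)) ℙ)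
    (U U' : Ω → EuclideanSpace ℝ (Fin q))
    (hU : U = fun ω => ∑' k : ℕ, (fwdProd A 1 k ω) (B (k + 1) ω))
    (hU' : U' = fun ω => ∑' k : ℕ, (fwdProd A 2 k ω) (B (k + 2) ω)) :
    (∀ᵐ ω ∂ℙ, U ω = A 1 ω (U' ω) + B 1 ω) ∧
      IndepFun U' (fun ω => (A 1 ω, B 1 ω)) ℙ ∧
      IdentDistrib U' U ℙ ℙ := by
  classical
  set pair : ℕ → Ω → ((EuclideanSpace ℝ (Fin q) →L[ℝ] EuclideanSpace ℝ (Fin q)) × EuclideanSpace ℝ (Fin q)) := fun k ω => (A (k + 1) ω, B (k + 1) ω) with hpair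
  have hpairmeas : ∀ k, Measurable (pair k) := fun k => (hAmeas k).prodMk (hBmeas k)
  -- the log-norm sequences
  set X : ℕ → Ω → ℝ := fun k ω => Real.log ‖A (k + 1) ω‖ with hX
  set Y : ℕ → Ω → ℝ := fun k ω => Real.log (max 1 ‖B (k + 1) ω‖) with hY
  have hgXmeas : Measurable (fun p : ((EuclideanSpace ℝ (Fin q) →L[ℝ] EuclideanSpace ℝ (Fin q)) × EuclideanSpace ℝ (Fin q)) => Real.log ‖p.1‖) :=
    Real.measurable_log.comp measurable_fst.norm
  have hgYmeas : Measurable (fun p : ((EuclideanSpace ℝ (Fin q) →L[ℝ] EuclideanSpace ℝ (Fin q)) × EuclideanSpace ℝ (Fin q)) => Real.log (max 1 ‖p.2‖)) :=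
    Real.measurable_log.comp (measurable_const.max measurable_snd.norm)
  have hXiid : iIndepFun X ℙ :=
    hiid.comp (fun _ p => Real.log ‖p.1‖) (fun _ => hgXmeas)
  have hYiid : iIndepFun Y ℙ :=
    hiid.comp (fun _ p => Real.log (max 1 ‖p.2‖)) (fun _ => hgYmeas)
  have hXident : ∀ i, IdentDistrib (X i) (X 0) ℙ ℙ := fun i =>
    (hident i).comp hgXmeas
  have hYident : ∀ i, IdentDistrib (Y i) (Y 0) ℙ ℙ := fun i =>
    (hident i).comp hgYmeas
  have hSLLN_X := strong_law_ae X hlogA_int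
    (fun i j hij => hXiid.indepFun hij) hXident
  have hSLLN_Y := strong_law_ae Y hlogB_int
    (fun i j hij => hYiid.indepFun hij) hYident
  -- almost sure summability of both series (in norm)
  have hAS : ∀ᵐ ω ∂ℙ, Summable (fun k => ‖fwdProd A 1 k ω (B (k + 1) ω)‖) ∧
      Summable (fun k => ‖fwdProd A 2 k ω (B (k + 2) ω)‖) := by
    filter_upwards [hSLLN_X, hSLLN_Y] with ω hXω hYω
    set ℓ : ℝ := ∫ ω, Real.log ‖A 1 ω‖ ∂ℙ with hℓ
    have hXω' : Tendsto (fun n : ℕ => (n : ℝ)⁻¹ * ∑ i ∈ Finset.range n, X i ω) atTop (𝓝 ℓ) := by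
      simpa [smul_eq_mul] using hXω
    have hYω' : Tendsto (fun n : ℕ => (n : ℝ)⁻¹ * ∑ i ∈ Finset.range n, Y i ω) atTop
        (𝓝 (∫ ω, Real.log (max 1 ‖B 1 ω‖) ∂ℙ)) := by
      simpa [smul_eq_mul] using hYω
    -- Y n / n → 0
    have hY0 : Tendsto (fun n : ℕ => (n : ℝ)⁻¹ * Y n ω) atTop (𝓝 0) := by
      have := tendsto_succ_sub_div hYω'
      apply this.congr
      intro n
      congr 1
      rw [Finset.sum_range_succ]
      ring
    set L : ℕ → ℝ := fun n => ∑ i ∈ Finset.range n, X i ω with hL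
    have hcomb : Tendsto (fun n : ℕ => (n : ℝ)⁻¹ * (L n + Y n ω)) atTop (𝓝 (ℓ + 0)) := by
      have := hXω'.add hY0
      apply this.congr
      intro n
      ring
    have hℓneg : ℓ < 0 := hlogA_neg
    have hev : ∀ᶠ n : ℕ in atTop, L n + Y n ω ≤ (ℓ / 2) * n := by
      have h1 : ∀ᶠ n : ℕ in atTop, (n : ℝ)⁻¹ * (L n + Y n ω) < ℓ / 2 :=
        (tendsto_order.1 hcomb).2 (ℓ / 2) (by linarith)
      filter_upwards [h1, eventually_ge_atTop 1] with n hn hn1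
      have hnpos : (0 : ℝ) < n := by exact_mod_cast hn1
      have := (mul_lt_mul_iff_right₀ hnpos).2 hn
      rw [← mul_assoc, mul_inv_cancel₀ hnpos.ne', one_mul] at this
      linarith [this]
    set r : ℝ := Real.exp (ℓ / 2) with hr
    have hr0 : (0 : ℝ) ≤ r := Real.exp_nonneg _
    have hr1 : r < 1 := Real.exp_lt_one_iff.2 (by linarith)
    -- bound for the first series
    have hbound1 : ∀ k, ‖fwdProd A 1 k ω (B (k + 1) ω)‖ ≤ Real.exp (L k + Y k ω) := by
      intro k
      calc ‖fwdProd A 1 k ω (B (k + 1) ω)‖ ≤ ‖fwdProd A 1 k ω‖ * ‖B (k + 1) ω‖ :=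
        ContinuousLinearMap.le_opNorm _ _
      _ ≤ Real.exp (L k) * Real.exp (Y k ω) := by
          apply mul_le_mul
          · have h := fwdProd_norm_le A 1 k ω
            have heq : ∑ i ∈ Finset.range k, Real.log ‖A (1 + i) ω‖ = L k := by
              apply Finset.sum_congr rfl
              intro i _
              rw [Nat.add_comm 1 i]
            rwa [heq] at h
          · calc ‖B (k + 1) ω‖ ≤ max 1 ‖B (k + 1) ω‖ := le_max_right _ _
            _ ≤ Real.exp (Y k ω) := Real.le_exp_log _
          · exact norm_nonneg _
          · exact Real.exp_nonneg _
      _ = Real.exp (L k + Y k ω) := (Real.exp_add _ _).symm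
    have hbound2 : ∀ k, ‖fwdProd A 2 k ω (B (k + 2) ω)‖ ≤
        Real.exp (-X 0 ω) * Real.exp (L (k + 1) + Y (k + 1) ω) := by
      intro k
      calc ‖fwdProd A 2 k ω (B (k + 2) ω)‖ ≤ ‖fwdProd A 2 k ω‖ * ‖B (k + 2) ω‖ :=
        ContinuousLinearMap.le_opNorm _ _
      _ ≤ Real.exp (L (k + 1) - X 0 ω) * Real.exp (Y (k + 1) ω) := by
          apply mul_le_mul
          · have h := fwdProd_norm_le A 2 k ω
            have heq : ∑ i ∈ Finset.range k, Real.log ‖A (2 + i) ω‖ = L (k + 1) - X 0 ω := by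
              have heq2 : L (k + 1) = X 0 ω + ∑ i ∈ Finset.range k, X (i + 1) ω := by
                show (∑ i ∈ Finset.range (k + 1), X i ω) = _
                rw [Finset.sum_range_succ' (fun i => X i ω) k]
                ring
              rw [heq2]
              have hXe : ∀ i, Real.log ‖A (2 + i) ω‖ = X (i + 1) ω := by
                intro i
                rw [Nat.add_comm 2 i]
              simp only [hXe]
              ring
            rwa [heq] at h
          · calc ‖B (k + 2) ω‖ ≤ max 1 ‖B (k + 2) ω‖ := le_max_right _ _
            _ ≤ Real.exp (Y (k + 1) ω) := Real.le_exp_log _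
          · exact norm_nonneg _
          · exact Real.exp_nonneg _
      _ = Real.exp (-X 0 ω) * Real.exp (L (k + 1) + Y (k + 1) ω) := by
          rw [← Real.exp_add, ← Real.exp_add]
          congr 1
          ring
    have hgeom : ∀ᶠ k : ℕ in atTop, Real.exp (L k + Y k ω) ≤ r ^ k := by
      filter_upwards [hev] with k hk
      calc Real.exp (L k + Y k ω) ≤ Real.exp ((ℓ / 2) * k) := Real.exp_le_exp.2 hk
      _ = r ^ k := by rw [hr, ← Real.exp_nat_mul]; congr 1; ring
    constructor
    · apply summable_of_eventually_le_geometric hr0 hr1 (fun n => norm_nonneg _) (C := 1)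
      filter_upwards [hgeom] with k hk
      rw [one_mul]
      exact (hbound1 k).trans hk
    · apply summable_of_eventually_le_geometric hr0 hr1 (fun n => norm_nonneg _)
        (C := Real.exp (-X 0 ω))
      have hgeom' : ∀ᶠ k : ℕ in atTop, Real.exp (L (k + 1) + Y (k + 1) ω) ≤ r ^ k := by
        have := (tendsto_add_atTop_nat 1).eventually hgeom
        filter_upwards [this] with k hk
        calc Real.exp (L (k + 1) + Y (k + 1) ω) ≤ r ^ (k + 1) := hk
        _ ≤ r ^ k := pow_le_pow_of_le_one hr0 hr1.le (Nat.le_succ k)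
      filter_upwards [hgeom'] with k hk
      calc ‖fwdProd A 2 k ω (B (k + 2) ω)‖ ≤
          Real.exp (-X 0 ω) * Real.exp (L (k + 1) + Y (k + 1) ω) := hbound2 k
      _ ≤ Real.exp (-X 0 ω) * r ^ k := by
          apply mul_le_mul_of_nonneg_left hk (Real.exp_nonneg _)
  -- Part (i)
  have part1 : ∀ᵐ ω ∂ℙ, U ω = A 1 ω (U' ω) + B 1 ω := by
    filter_upwards [hAS] with ω hω
    obtain ⟨h1, h2⟩ := hω
    have hs1 : Summable (fun k => fwdProd A 1 k ω (B (k + 1) ω)) := h1.of_norm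
    have hs2 : Summable (fun k => fwdProd A 2 k ω (B (k + 2) ω)) := h2.of_norm
    rw [hU, hU']
    simp only
    rw [Summable.tsum_eq_zero_add hs1]
    have e0 : fwdProd A 1 0 ω (B 1 ω) = B 1 ω := by
      rw [fwdProd_zero]; simp
    have esucc : ∀ k : ℕ, fwdProd A 1 (k + 1) ω (B (k + 2) ω)
        = A 1 ω (fwdProd A 2 k ω (B (k + 2) ω)) := by
      intro k
      rw [fwdProd_succ_left]
      rfl
    rw [e0]
    rw [tsum_congr esucc]
    rw [← ContinuousLinearMap.map_tsum _ hs2]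
    exact add_comm _ _
  -- the sequence maps
  set S0 : Ω → (ℕ → ((EuclideanSpace ℝ (Fin q) →L[ℝ] EuclideanSpace ℝ (Fin q)) × EuclideanSpace ℝ (Fin q))) := fun ω n => pair n ω with hS0def
  set S1 : Ω → (ℕ → ((EuclideanSpace ℝ (Fin q) →L[ℝ] EuclideanSpace ℝ (Fin q)) × EuclideanSpace ℝ (Fin q))) := fun ω n => pair (n + 1) ω with hS1def
  have hS0 : Measurable S0 := measurable_pi_lambda _ (fun n => hpairmeas n)
  have hS1 : Measurable S1 := measurable_pi_lambda _ (fun n => hpairmeas (n + 1))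
  -- the universal functional
  set Φ : (ℕ → ((EuclideanSpace ℝ (Fin q) →L[ℝ] EuclideanSpace ℝ (Fin q)) × EuclideanSpace ℝ (Fin q))) → EuclideanSpace ℝ (Fin q) := fun x => ∑' k : ℕ,
    (((List.range k).map (fun i => (x i).1)).prod) ((x k).2) with hΦdef
  have hprodmeas : ∀ k : ℕ, Measurable (fun x : ℕ → ((EuclideanSpace ℝ (Fin q) →L[ℝ] EuclideanSpace ℝ (Fin q)) × EuclideanSpace ℝ (Fin q)) =>
      ((List.range k).map (fun i => (x i).1)).prod) := by
    intro k
    induction k with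
    | zero => simp only [List.range_zero, List.map_nil, List.prod_nil]; exact measurable_const
    | succ k ih =>
      have : (fun x : ℕ → ((EuclideanSpace ℝ (Fin q) →L[ℝ] EuclideanSpace ℝ (Fin q)) × EuclideanSpace ℝ (Fin q)) => ((List.range (k+1)).map (fun i => (x i).1)).prod)
          = fun x => (((List.range k).map (fun i => (x i).1)).prod) * (x k).1 := by
        funext x
        rw [List.range_succ]
        simp
      rw [this]
      exact ih.mul (measurable_pi_apply k).fst
  have hΦ : Measurable Φ := by
    apply measurable_tsum_fin
    intro k
    exact isBoundedBilinearMap_apply.continuous.measurable.comp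
      ((hprodmeas k).prodMk (measurable_pi_apply k).snd)
  have hUΦ : U = Φ ∘ S0 := by
    funext ω
    rw [hU]
    simp only [Function.comp_apply, hΦdef]
    apply tsum_congr
    intro k
    congr 1
    rw [fwdProd_eq]
  have hU'Φ : U' = Φ ∘ S1 := by
    funext ω
    rw [hU']
    simp only [Function.comp_apply, hΦdef]
    apply tsum_congr
    intro k
    congr 1
    rw [fwdProd_eq]
  -- Part (ii) : independence
  have hiid' : iIndep (fun n => MeasurableSpace.comap (pair n) inferInstance) ℙ := hiid
  have part2 : IndepFun U' (fun ω => (A 1 ω, B 1 ω)) ℙ := by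
    have hsup := indep_biSup_compl (fun n => (hpairmeas n).comap_le) hiid' ({0}ᶜ : Set ℕ)
    have h_le1 : MeasurableSpace.comap U' inferInstance ≤
        ⨆ n ∈ ({0}ᶜ : Set ℕ), MeasurableSpace.comap (pair n) inferInstance := by
      rw [hU'Φ]
      rw [← MeasurableSpace.comap_comp]
      refine le_trans (MeasurableSpace.comap_mono hΦ.comap_le) ?_
      rw [show (MeasurableSpace.pi : MeasurableSpace (ℕ → ((EuclideanSpace ℝ (Fin q) →L[ℝ] EuclideanSpace ℝ (Fin q)) × EuclideanSpace ℝ (Fin q))))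
        = ⨆ n, MeasurableSpace.comap (fun x : ℕ → ((EuclideanSpace ℝ (Fin q) →L[ℝ] EuclideanSpace ℝ (Fin q)) × EuclideanSpace ℝ (Fin q)) => x n) inferInstance from rfl]
      rw [MeasurableSpace.comap_iSup]
      apply iSup_le
      intro n
      rw [MeasurableSpace.comap_comp]
      have : ((fun x : ℕ → ((EuclideanSpace ℝ (Fin q) →L[ℝ] EuclideanSpace ℝ (Fin q)) × EuclideanSpace ℝ (Fin q)) => x n) ∘ S1) = pair (n + 1) := rfl
      rw [this]
      have hmem : (n + 1 : ℕ) ∈ ({0}ᶜ : Set ℕ) := by simp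
      exact le_iSup₂ (f := fun (j : ℕ) (_ : j ∈ ({0}ᶜ : Set ℕ)) => MeasurableSpace.comap (pair j) inferInstance) (n + 1) hmem
    have h_le2 : MeasurableSpace.comap (fun ω => (A 1 ω, B 1 ω)) inferInstance ≤
        ⨆ n ∈ (({0}ᶜ : Set ℕ)ᶜ), MeasurableSpace.comap (pair n) inferInstance := by
      have h0 : pair 0 = fun ω => (A 1 ω, B 1 ω) := rfl
      rw [← h0]
      have hmem : (0 : ℕ) ∈ (({0}ᶜ : Set ℕ)ᶜ) := by simp
      exact le_iSup₂ (f := fun (j : ℕ) (_ : j ∈ (({0}ᶜ : Set ℕ)ᶜ)) => MeasurableSpace.comap (pair j) inferInstance) 0 hmem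
    exact indep_of_indep_of_le_left (indep_of_indep_of_le_right hsup h_le2) h_le1
  -- Part (iii) : identical distribution
  have hmap : Measure.map S1 ℙ = Measure.map S0 ℙ := by
    have hgen0 := generateFrom_piiUnionInter_measurableSet
      (fun n : ℕ => MeasurableSpace.comap
        (fun x : ℕ → ((EuclideanSpace ℝ (Fin q) →L[ℝ] EuclideanSpace ℝ (Fin q)) × EuclideanSpace ℝ (Fin q)) => x n)
        inferInstance) Set.univ
    have hgen := (hgen0.trans (by rw [iSup_univ]; rfl :
      (⨆ i ∈ (Set.univ : Set ℕ), MeasurableSpace.comap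
        (fun x : ℕ → ((EuclideanSpace ℝ (Fin q) →L[ℝ] EuclideanSpace ℝ (Fin q)) × EuclideanSpace ℝ (Fin q)) => x i)
        inferInstance) = MeasurableSpace.pi)).symm
    refine ext_of_generate_finite _ hgen
      (isPiSystem_piiUnionInter _
        (fun n => @MeasurableSpace.isPiSystem_measurableSet _ (MeasurableSpace.comap _ _)) _) ?_ ?_
    · rintro s ⟨t, -, f, hf, rfl⟩
      choose! sets hsets1 hsets2 using
        fun i (hi : i ∈ t) => MeasurableSpace.measurableSet_comap.1 (hf i hi)
      have hfin : ∀ i ∈ t, f i = (fun x : ℕ → ((EuclideanSpace ℝ (Fin q) →L[ℝ] EuclideanSpace ℝ (Fin q)) × EuclideanSpace ℝ (Fin q)) => x i) ⁻¹' sets i :=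
        fun i hi => (hsets2 i hi).symm
      have hsF : MeasurableSet (⋂ i ∈ t, f i) := by
        apply MeasurableSet.biInter t.countable_toSet
        intro i hi
        rw [hfin i hi]
        exact measurable_pi_apply i (hsets1 i hi)
      rw [Measure.map_apply hS1 hsF, Measure.map_apply hS0 hsF]
      have hpre1 : S1 ⁻¹' (⋂ i ∈ t, f i) = ⋂ i ∈ t, pair (i + 1) ⁻¹' sets i := by
        rw [Set.preimage_iInter₂]
        apply Set.iInter₂_congr
        intro i hi
        rw [hfin i hi]
        rfl
      have hpre0 : S0 ⁻¹' (⋂ i ∈ t, f i) = ⋂ i ∈ t, pair i ⁻¹' sets i := by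
        rw [Set.preimage_iInter₂]
        apply Set.iInter₂_congr
        intro i hi
        rw [hfin i hi]
        rfl
      rw [hpre1, hpre0]
      have hmarg : ∀ j : ℕ, ∀ s : Set (((EuclideanSpace ℝ (Fin q) →L[ℝ] EuclideanSpace ℝ (Fin q)) × EuclideanSpace ℝ (Fin q))), MeasurableSet s →
          ℙ (pair j ⁻¹' s) = Measure.map (pair 0) ℙ s := by
        intro j s hs
        rw [← Measure.map_apply (hpairmeas j) hs]
        exact congrFun (congrArg _ ((hident j).map_eq)) s
      -- first product, over shifted indices
      have hprod1 : ℙ (⋂ i ∈ t, pair (i + 1) ⁻¹' sets i)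
          = ∏ i ∈ t, ℙ (pair (i + 1) ⁻¹' sets i) := by
        have key := hiid.measure_inter_preimage_eq_mul (t.image (· + 1))
          (sets := fun j => sets (j - 1)) ?_
        · rw [Finset.set_biInter_finset_image] at key
          rw [Finset.prod_image (fun a _ b _ h => by omega)] at key
          simpa using key
        · intro j hj
          obtain ⟨i, hi, rfl⟩ := Finset.mem_image.1 hj
          simpa using hsets1 i hi
      have hprod0 : ℙ (⋂ i ∈ t, pair i ⁻¹' sets i)
          = ∏ i ∈ t, ℙ (pair i ⁻¹' sets i) :=
        hiid.measure_inter_preimage_eq_mul t (sets := sets) (fun i hi => hsets1 i hi)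
      rw [hprod1, hprod0]
      apply Finset.prod_congr rfl
      intro i hi
      rw [hmarg (i + 1) _ (hsets1 i hi), hmarg i _ (hsets1 i hi)]
    · have i1 : IsProbabilityMeasure (Measure.map S1 ℙ) := Measure.isProbabilityMeasure_map hS1.aemeasurable
      have i0 : IsProbabilityMeasure (Measure.map S0 ℙ) := Measure.isProbabilityMeasure_map hS0.aemeasurable
      rw [i1.measure_univ, i0.measure_univ]
  have part3 : IdentDistrib U' U ℙ ℙ := by
    rw [hUΦ, hU'Φ]
    exact IdentDistrib.comp ⟨hS1.aemeasurable, hS0.aemeasurable, hmap⟩ hΦ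
  exact ⟨part1, part2, part3⟩
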